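/- Under exchangeability and no ties, the histogram of the m conformal p-values over the n+1 atoms is uniformly distributed: for any nonnegative integers m_1,...,m_{n+1} summing to m, P(M_k((n+1)p) = m_k for all k) = 1/C(n+m, m). -/

import Mathlib

open MeasureTheory ProbabilityTheory

noncomputable def pval {Ω : Type*} (n : ℕ) (S : ℕ → Ω → ℝ) (i : ℕ) (ω : Ω) : ℝ :=
  (1 + ((Finset.range n).filter (fun j => S (n + i) ω ≤ S j ω)).card) / (n + 1)

def Exchangeable {Ω : Type*} [MeasurableSpace Ω] (P : Measure Ω) (N : ℕ)
    (S : ℕ → Ω → ℝ) : Prop :=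
  ∀ σ : Equiv.Perm (Fin N),
    Measure.map (fun ω => fun i : Fin N => S (σ i) ω) P
      = Measure.map (fun ω => fun i : Fin N => S i ω) P

def NoTies {Ω : Type*} [MeasurableSpace Ω] (P : Measure Ω) (N : ℕ)
    (S : ℕ → Ω → ℝ) : Prop :=
  ∀ᵐ ω ∂P, ∀ i < N, ∀ j < N, i ≠ j → S i ω ≠ S j ω

/- ### Auxiliary combinatorics -/

section Aux

variable {n m : ℕ}

/-- number of elements of the complement of `T` that are `≥ a` ("gap index"). -/
noncomputable def cgap (n m : ℕ) (T : Finset (Fin (n+m))) (a : Fin (n+m)) : ℕ :=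
  (Tᶜ.filter fun c => a ≤ c).card

/-- histogram of the gap indices over elements of `T`. -/
noncomputable def chist (n m : ℕ) (T : Finset (Fin (n+m))) : Fin (n+1) → ℕ :=
  fun k => (T.filter fun a => cgap n m T a = (k : ℕ)).card

lemma cgap_antitone (T : Finset (Fin (n+m))) {a b : Fin (n+m)} (h : a ≤ b) :
    cgap n m T b ≤ cgap n m T a := by
  refine Finset.card_le_card (fun c hc => ?_)
  simp only [Finset.mem_filter] at hc ⊢
  exact ⟨hc.1, le_trans h hc.2⟩

lemma cgap_le (T : Finset (Fin (n+m))) (hT : T.card = m) (a : Fin (n+m)) :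
    cgap n m T a ≤ n := by
  have h1 : Tᶜ.card = n := by
    rw [Finset.card_compl, hT]; simp [Fintype.card_fin]
  calc cgap n m T a ≤ Tᶜ.card := Finset.card_le_card (Finset.filter_subset _ _)
  _ = n := h1

lemma chist_sum (T : Finset (Fin (n+m))) (hT : T.card = m) :
    ∑ k, chist n m T k = m := by
  have h := Finset.card_eq_sum_card_fiberwise
    (f := cgap n m T) (s := T) (t := Finset.range (n+1))
    (fun a _ => Finset.mem_range.2 (Nat.lt_succ_of_le (cgap_le T hT a)))
  have h2 : ∑ k : Fin (n+1), chist n m T k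
      = ∑ b ∈ Finset.range (n+1), (T.filter fun a => cgap n m T a = b).card :=
    Fin.sum_univ_eq_sum_range (fun b => (T.filter fun a => cgap n m T a = b).card) (n+1)
  rw [h2, ← h, hT]

lemma chist_inj_aux (T T' : Finset (Fin (n+m))) (hT : T.card = m) (hT' : T'.card = m)
    (hh : chist n m T = chist n m T') (a : Fin (n+m)) (haT : a ∈ T) (haT' : a ∉ T')
    (hagree : ∀ b, a < b → (b ∈ T ↔ b ∈ T')) : False := by
  classical
  set G := cgap n m T a with hG
  have hcagree : ∀ b, a < b → (b ∈ Tᶜ ↔ b ∈ T'ᶜ) := by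
    intro b hb
    simp only [Finset.mem_compl]
    exact not_iff_not.2 (hagree b hb)
  have hgagree : ∀ b, a < b → cgap n m T b = cgap n m T' b := by
    intro b hb
    unfold cgap
    congr 1
    ext c
    simp only [Finset.mem_filter]
    constructor
    · rintro ⟨hc, hbc⟩; exact ⟨(hcagree c (lt_of_lt_of_le hb hbc)).1 hc, hbc⟩
    · rintro ⟨hc, hbc⟩; exact ⟨(hcagree c (lt_of_lt_of_le hb hbc)).2 hc, hbc⟩
  have hA1 : Tᶜ.filter (fun c => a ≤ c) = Tᶜ.filter (fun c => a < c) := by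
    ext c
    simp only [Finset.mem_filter, Finset.mem_compl]
    constructor
    · rintro ⟨hc, hac⟩
      rcases lt_or_eq_of_le hac with h | h
      · exact ⟨hc, h⟩
      · exact absurd haT (h ▸ hc)
    · rintro ⟨hc, hac⟩; exact ⟨hc, le_of_lt hac⟩
  have hA2 : T'ᶜ.filter (fun c => a ≤ c) = insert a (Tᶜ.filter (fun c => a < c)) := by
    ext c
    simp only [Finset.mem_filter, Finset.mem_compl, Finset.mem_insert]
    constructor
    · rintro ⟨hc, hac⟩
      rcases lt_or_eq_of_le hac with h | h
      · exact Or.inr ⟨(Finset.mem_compl.1 ((hcagree c h).2 (Finset.mem_compl.2 hc))), h⟩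
      · exact Or.inl h.symm
    · rintro (rfl | ⟨hc, hac⟩)
      · exact ⟨haT', le_refl _⟩
      · exact ⟨Finset.mem_compl.1 ((hcagree c hac).1 (Finset.mem_compl.2 hc)), le_of_lt hac⟩
  have hgap' : cgap n m T' a = G + 1 := by
    rw [hG]
    unfold cgap
    rw [hA2, hA1, Finset.card_insert_of_notMem (by simp)]
  have hGn : G < n + 1 := Nat.lt_succ_of_le (cgap_le T hT a)
  set k₀ : Fin (n+1) := ⟨G, hGn⟩ with hk₀
  have hfib : T'.filter (fun t => cgap n m T' t = G)
      = T.filter (fun t => cgap n m T t = G ∧ a < t) := by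
    ext t
    simp only [Finset.mem_filter]
    constructor
    · rintro ⟨ht, hgt⟩
      have hat : a < t := by
        by_contra hle
        push_neg at hle
        have h1 : cgap n m T' a ≤ cgap n m T' t := cgap_antitone T' hle
        omega
      exact ⟨(hagree t hat).2 ht, (hgagree t hat).symm ▸ hgt, hat⟩
    · rintro ⟨ht, hgt, hat⟩
      exact ⟨(hagree t hat).1 ht, (hgagree t hat) ▸ hgt⟩
  have hsub : insert a (T.filter (fun t => cgap n m T t = G ∧ a < t))
      ⊆ T.filter (fun t => cgap n m T t = G) := by
    intro t ht
    rcases Finset.mem_insert.1 ht with rfl | ht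
    · exact Finset.mem_filter.2 ⟨haT, rfl⟩
    · have := Finset.mem_filter.1 ht
      exact Finset.mem_filter.2 ⟨this.1, this.2.1⟩
  have hcard : (T.filter (fun t => cgap n m T t = G ∧ a < t)).card + 1
      ≤ (T.filter (fun t => cgap n m T t = G)).card := by
    have := Finset.card_le_card hsub
    rwa [Finset.card_insert_of_notMem (by simp)] at this
  have heq : chist n m T k₀ = chist n m T' k₀ := by rw [hh]
  unfold chist at heq
  simp only [hk₀] at heq
  rw [hfib] at heq
  omega

lemma chist_inj (T T' : Finset (Fin (n+m))) (hT : T.card = m) (hT' : T'.card = m)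
    (hh : chist n m T = chist n m T') : T = T' := by
  classical
  by_contra hne
  have hD : ((T \ T') ∪ (T' \ T)).Nonempty := by
    rw [Finset.nonempty_iff_ne_empty]
    intro h
    apply hne
    ext x
    constructor
    · intro hx
      by_contra hx'
      have : x ∈ (T \ T') ∪ (T' \ T) := Finset.mem_union_left _ (Finset.mem_sdiff.2 ⟨hx, hx'⟩)
      simp [h] at this
    · intro hx
      by_contra hx'
      have : x ∈ (T \ T') ∪ (T' \ T) := Finset.mem_union_right _ (Finset.mem_sdiff.2 ⟨hx, hx'⟩)
      simp [h] at this
  set a := ((T \ T') ∪ (T' \ T)).max' hD with ha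
  have hmem := ((T \ T') ∪ (T' \ T)).max'_mem hD
  have hagree : ∀ b, a < b → (b ∈ T ↔ b ∈ T') := by
    intro b hb
    by_contra hiff
    have hbmem : b ∈ (T \ T') ∪ (T' \ T) := by
      simp only [Finset.mem_union, Finset.mem_sdiff]
      by_cases h1 : b ∈ T
      · exact Or.inl ⟨h1, fun h2 => hiff ⟨fun _ => h2, fun _ => h1⟩⟩
      · by_cases h2 : b ∈ T'
        · exact Or.inr ⟨h2, h1⟩
        · exact absurd ⟨fun h => absurd h h1, fun h => absurd h h2⟩ hiff
    exact absurd (Finset.le_max' _ b hbmem) (not_le.2 hb)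
  rcases Finset.mem_union.1 hmem with h | h
  · have := Finset.mem_sdiff.1 h
    exact chist_inj_aux T T' hT hT' hh a this.1 this.2 hagree
  · have := Finset.mem_sdiff.1 h
    exact chist_inj_aux T' T hT' hT hh.symm a this.1 this.2
      (fun b hb => (hagree b hb).symm)

/-- vectors summing to `m` are in bijection with multisets of size `m` (stars and bars). -/
noncomputable def vecSymEquiv (p m : ℕ) :
    {v : Fin p → ℕ // ∑ k, v k = m} ≃ Sym (Fin p) m where
  toFun v := ⟨∑ k : Fin p, Multiset.replicate (v.1 k) k, by
    have key : ∀ (s : Finset (Fin p)),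
        Multiset.card (∑ k ∈ s, Multiset.replicate (v.1 k) k) = ∑ k ∈ s, v.1 k := by
      intro s
      induction s using Finset.cons_induction with
      | empty => simp
      | cons a s ha ih => simp [Finset.sum_cons, Multiset.card_add, ih]
    rw [key]; exact v.2⟩
  invFun s := ⟨fun k => Multiset.count k s.1, by
    rw [Multiset.sum_count_eq_card (fun a _ => Finset.mem_univ a)]; exact s.2⟩
  left_inv v := by
    ext k
    simp [Multiset.count_sum', Multiset.count_replicate]
  right_inv s := by
    ext1
    simp only
    ext a
    simp [Multiset.count_sum', Multiset.count_replicate]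

noncomputable instance vecFintype (p m : ℕ) : Fintype {v : Fin p → ℕ // ∑ k, v k = m} :=
  Fintype.ofEquiv _ (vecSymEquiv p m).symm

lemma card_vec (p m : ℕ) :
    Fintype.card {v : Fin p → ℕ // ∑ k, v k = m} = (p + m - 1).choose m := by
  rw [Fintype.card_congr (vecSymEquiv p m), Sym.card_sym_eq_choose, Fintype.card_fin]

lemma chist_bij_exists (mvec : Fin (n+1) → ℕ) (hsum : ∑ k, mvec k = m) :
    ∃ T : Finset (Fin (n+m)), T.card = m ∧ chist n m T = mvec := by
  classical
  let Φ : {T : Finset (Fin (n+m)) // T.card = m} → {v : Fin (n+1) → ℕ // ∑ k, v k = m} :=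
    fun T => ⟨chist n m T.1, chist_sum T.1 T.2⟩
  have hinj : Function.Injective Φ := by
    rintro ⟨T, hT⟩ ⟨T', hT'⟩ h
    exact Subtype.ext (chist_inj T T' hT hT' (congrArg Subtype.val h))
  have hcard : Fintype.card {T : Finset (Fin (n+m)) // T.card = m}
      = Fintype.card {v : Fin (n+1) → ℕ // ∑ k, v k = m} := by
    rw [Fintype.card_finset_len, card_vec, Fintype.card_fin]
    congr 1
    omega
  have hbij : Function.Bijective Φ := (Fintype.bijective_iff_injective_and_card Φ).2 ⟨hinj, hcard⟩
  obtain ⟨⟨T, hT⟩, hΦ⟩ := hbij.2 ⟨mvec, hsum⟩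
  exact ⟨T, hT, congrArg Subtype.val hΦ⟩

lemma natAdd_inj {a b : Fin m} (h : Fin.natAdd n a = Fin.natAdd n b) : a = b := by
  have := congrArg Fin.val h
  simp only [Fin.coe_natAdd] at this
  exact Fin.ext (by omega)

noncomputable def fibMap (T : Finset (Fin (n+m)))
    (fg : (Fin n ≃ {x : Fin (n+m) // x ∉ T}) × (Fin m ≃ {x : Fin (n+m) // x ∈ T})) :
    Equiv.Perm (Fin (n+m)) :=
  (finSumFinEquiv.symm).trans ((fg.1.sumCongr fg.2).trans
    ((Equiv.sumComm _ _).trans (Equiv.sumCompl (· ∈ T))))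

lemma fibMap_natAdd (T : Finset (Fin (n+m))) (fg) (i : Fin m) :
    fibMap T fg (Fin.natAdd n i) = (fg.2 i : Fin (n+m)) := by
  simp [fibMap]

lemma fibMap_castAdd (T : Finset (Fin (n+m))) (fg) (j : Fin n) :
    fibMap T fg (Fin.castAdd m j) = (fg.1 j : Fin (n+m)) := by
  simp [fibMap]

lemma card_subtype_mem (T : Finset (Fin (n+m))) : Fintype.card {x : Fin (n+m) // x ∈ T} = T.card :=
  Fintype.card_coe T

lemma card_subtype_not_mem (T : Finset (Fin (n+m))) (hT : T.card = m) :
    Fintype.card {x : Fin (n+m) // x ∉ T} = n := by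
  rw [Fintype.card_subtype_compl, card_subtype_mem, hT, Fintype.card_fin]
  omega

lemma fiber_card (T : Finset (Fin (n+m))) (hT : T.card = m) :
    Fintype.card {r : Equiv.Perm (Fin (n+m)) // ∀ i : Fin m, r (Fin.natAdd n i) ∈ T}
      = n.factorial * m.factorial := by
  classical
  let Φ : ((Fin n ≃ {x : Fin (n+m) // x ∉ T}) × (Fin m ≃ {x : Fin (n+m) // x ∈ T})) →
      {r : Equiv.Perm (Fin (n+m)) // ∀ i : Fin m, r (Fin.natAdd n i) ∈ T} :=
    fun fg => ⟨fibMap T fg, fun i => by rw [fibMap_natAdd]; exact (fg.2 i).2⟩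
  have hbij : Function.Bijective Φ := by
    constructor
    · rintro ⟨f, g⟩ ⟨f', g'⟩ h
      have h' := congrArg Subtype.val h
      simp only [Φ] at h'
      have hf : f = f' := by
        ext j : 1
        have := congrArg (fun (e : Equiv.Perm (Fin (n+m))) => e (Fin.castAdd m j)) h'
        simp only [fibMap_castAdd] at this
        exact Subtype.ext this
      have hg : g = g' := by
        ext i : 1
        have := congrArg (fun (e : Equiv.Perm (Fin (n+m))) => e (Fin.natAdd n i)) h'
        simp only [fibMap_natAdd] at this
        exact Subtype.ext this
      rw [Prod.ext_iff]; exact ⟨hf, hg⟩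
    · rintro ⟨r, hr⟩
      have hrT : ∀ j : Fin n, r (Fin.castAdd m j) ∉ T := by
        intro j hj
        have himg : Finset.image (fun i : Fin m => r (Fin.natAdd n i)) Finset.univ = T := by
          apply Finset.eq_of_subset_of_card_le
          · intro x hx
            obtain ⟨i, _, rfl⟩ := Finset.mem_image.1 hx
            exact hr i
          · rw [Finset.card_image_of_injective _
              (fun a b hab => natAdd_inj (r.injective hab))]
            simp [hT]
        rw [← himg] at hj
        obtain ⟨i, _, hi⟩ := Finset.mem_image.1 hj
        have := r.injective hi
        have hv : (Fin.natAdd n i).val = (Fin.castAdd m j).val := congrArg Fin.val this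
        simp only [Fin.coe_natAdd, Fin.coe_castAdd] at hv
        omega
      let g : Fin m ≃ {x : Fin (n+m) // x ∈ T} :=
        Equiv.ofBijective (fun i => ⟨r (Fin.natAdd n i), hr i⟩)
          ((Fintype.bijective_iff_injective_and_card _).2
            ⟨fun a b hab => natAdd_inj (r.injective (congrArg Subtype.val hab)),
             by rw [card_subtype_mem, hT, Fintype.card_fin]⟩)
      let f : Fin n ≃ {x : Fin (n+m) // x ∉ T} :=
        Equiv.ofBijective (fun j => ⟨r (Fin.castAdd m j), hrT j⟩)
          ((Fintype.bijective_iff_injective_and_card _).2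
            ⟨fun a b hab => Fin.castAdd_injective _ m (r.injective (congrArg Subtype.val hab)),
             by rw [card_subtype_not_mem T hT, Fintype.card_fin]⟩)
      refine ⟨⟨f, g⟩, Subtype.ext ?_⟩
      ext a : 1
      obtain ⟨c, rfl⟩ : ∃ c : Fin n ⊕ Fin m, finSumFinEquiv c = a := ⟨finSumFinEquiv.symm a, by simp⟩
      cases c with
      | inl j =>
        rw [finSumFinEquiv_apply_left]
        rw [fibMap_castAdd]
        rfl
      | inr i =>
        rw [finSumFinEquiv_apply_right]
        rw [fibMap_natAdd]
        rfl
  rw [← Fintype.card_of_bijective hbij, Fintype.card_prod,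
    Fintype.card_equiv (Fintype.equivFinOfCardEq (card_subtype_not_mem T hT)).symm,
    Fintype.card_equiv (Fintype.equivFinOfCardEq (by rw [card_subtype_mem, hT])).symm,
    Fintype.card_fin, Fintype.card_fin]

/-- the count of calibration scores above test score `i`, in terms of the rank map `r`. -/
noncomputable def cnt (n m : ℕ) (r : Equiv.Perm (Fin (n+m))) (i : Fin m) : ℕ :=
  (Finset.univ.filter fun j : Fin n => r (Fin.natAdd n i) ≤ r (Fin.castAdd m j)).card

/-- the set of ranks of the test points. -/
noncomputable def Tset (n m : ℕ) (r : Equiv.Perm (Fin (n+m))) : Finset (Fin (n+m)) :=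
  Finset.image (fun i : Fin m => r (Fin.natAdd n i)) Finset.univ

lemma Tset_card (r : Equiv.Perm (Fin (n+m))) : (Tset n m r).card = m := by
  rw [Tset, Finset.card_image_of_injective _ (fun a b hab => natAdd_inj (r.injective hab))]
  simp

lemma Tset_compl (r : Equiv.Perm (Fin (n+m))) :
    (Tset n m r)ᶜ = Finset.image (fun j : Fin n => r (Fin.castAdd m j)) Finset.univ := by
  refine (Finset.eq_of_subset_of_card_le ?_ ?_).symm
  · intro x hx
    obtain ⟨j, _, rfl⟩ := Finset.mem_image.1 hx
    rw [Finset.mem_compl]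
    intro hmem
    obtain ⟨i, _, hi⟩ := Finset.mem_image.1 hmem
    have := congrArg Fin.val (r.injective hi)
    simp only [Fin.coe_natAdd, Fin.coe_castAdd] at this
    omega
  · rw [Finset.card_compl, Tset_card, Fintype.card_fin,
      Finset.card_image_of_injective _ (fun a b hab => Fin.castAdd_injective _ m (r.injective hab))]
    simp

lemma cnt_eq_cgap (r : Equiv.Perm (Fin (n+m))) (i : Fin m) :
    cnt n m r i = cgap n m (Tset n m r) (r (Fin.natAdd n i)) := by
  rw [cgap, Tset_compl, Finset.filter_image,
    Finset.card_image_of_injective _ (fun a b hab => Fin.castAdd_injective _ m (r.injective hab))]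
  rfl

lemma hist_transfer (r : Equiv.Perm (Fin (n+m))) (k : ℕ) :
    (Finset.univ.filter fun i : Fin m => cnt n m r i = k).card
      = ((Tset n m r).filter fun a => cgap n m (Tset n m r) a = k).card := by
  refine Finset.card_bij (fun i _ => r (Fin.natAdd n i)) ?_ ?_ ?_
  · intro i hi
    simp only [Finset.mem_filter] at hi ⊢
    refine ⟨Finset.mem_image.2 ⟨i, Finset.mem_univ _, rfl⟩, ?_⟩
    rw [← cnt_eq_cgap]
    exact hi.2
  · intro a _ b _ hab
    exact natAdd_inj (r.injective hab)
  · intro a ha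
    simp only [Finset.mem_filter] at ha
    obtain ⟨i, _, rfl⟩ := Finset.mem_image.1 ha.1
    refine ⟨i, Finset.mem_filter.2 ⟨Finset.mem_univ _, ?_⟩, rfl⟩
    rw [cnt_eq_cgap]
    exact ha.2

lemma count_perms (mvec : Fin (n+1) → ℕ) (hsum : ∑ k, mvec k = m) :
    Fintype.card {σ : Equiv.Perm (Fin (n+m)) //
        ∀ k : Fin (n+1), (Finset.univ.filter fun i : Fin m => cnt n m σ.symm i = (k:ℕ)).card = mvec k}
      = n.factorial * m.factorial := by
  classical
  obtain ⟨T₀, hT₀, hhist₀⟩ := chist_bij_exists mvec hsum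
  let Q : Equiv.Perm (Fin (n+m)) → Prop := fun r =>
    ∀ k : Fin (n+1), (Finset.univ.filter fun i : Fin m => cnt n m r i = (k:ℕ)).card = mvec k
  have e1 : {σ : Equiv.Perm (Fin (n+m)) // Q σ.symm} ≃ {r : Equiv.Perm (Fin (n+m)) // Q r} :=
    ⟨fun σ => ⟨σ.1.symm, σ.2⟩, fun r => ⟨r.1.symm, by simpa using r.2⟩,
     fun σ => Subtype.ext (Equiv.symm_symm _), fun r => Subtype.ext (Equiv.symm_symm _)⟩
  have hQiff : ∀ r : Equiv.Perm (Fin (n+m)), Q r ↔ (∀ i : Fin m, r (Fin.natAdd n i) ∈ T₀) := by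
    intro r
    constructor
    · intro hQ
      have hc : chist n m (Tset n m r) = mvec := by
        funext k
        rw [chist, ← hist_transfer]
        exact hQ k
      have hTeq : Tset n m r = T₀ :=
        chist_inj _ _ (Tset_card r) hT₀ (hc.trans hhist₀.symm)
      intro i
      rw [← hTeq]
      exact Finset.mem_image.2 ⟨i, Finset.mem_univ _, rfl⟩
    · intro hmem
      have hTeq : Tset n m r = T₀ := by
        apply Finset.eq_of_subset_of_card_le
        · intro x hx
          obtain ⟨i, _, rfl⟩ := Finset.mem_image.1 hx
          exact hmem i
        · rw [hT₀, Tset_card]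
      intro k
      rw [hist_transfer, ← chist, hTeq, hhist₀]
  calc Fintype.card {σ : Equiv.Perm (Fin (n+m)) // Q σ.symm}
      = Fintype.card {r : Equiv.Perm (Fin (n+m)) // Q r} := Fintype.card_congr e1
    _ = Fintype.card {r : Equiv.Perm (Fin (n+m)) // ∀ i : Fin m, r (Fin.natAdd n i) ∈ T₀} :=
        Fintype.card_congr (Equiv.subtypeEquivRight hQiff)
    _ = n.factorial * m.factorial := fiber_card T₀ hT₀

lemma exists_sorting {N : ℕ} (x : Fin N → ℝ) (hx : Function.Injective x) :
    ∃ σ : Equiv.Perm (Fin N), StrictMono (x ∘ σ) := by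
  classical
  let s : Finset ℝ := Finset.image x Finset.univ
  have hcard : s.card = N := by
    rw [Finset.card_image_of_injective _ hx, Finset.card_univ, Fintype.card_fin]
  let e := s.orderIsoOfFin hcard
  have hxe : Function.Bijective (fun i : Fin N =>
      (⟨x i, Finset.mem_image_of_mem x (Finset.mem_univ i)⟩ : {y // y ∈ s})) := by
    refine (Fintype.bijective_iff_injective_and_card _).2 ⟨?_, ?_⟩
    · intro a b hab
      exact hx (congrArg Subtype.val hab)
    · rw [Fintype.card_coe, hcard, Fintype.card_fin]
  let xe : Fin N ≃ {y // y ∈ s} := Equiv.ofBijective _ hxe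
  refine ⟨e.toEquiv.trans xe.symm, ?_⟩
  intro i j hij
  have hv : ∀ i : Fin N, x ((e.toEquiv.trans xe.symm) i) = (e i : ℝ) := by
    intro i
    have : xe (xe.symm (e i)) = e i := xe.apply_symm_apply _
    exact congrArg Subtype.val this
  show x ((e.toEquiv.trans xe.symm) i) < x ((e.toEquiv.trans xe.symm) j)
  rw [hv i, hv j]
  exact Subtype.coe_lt_coe.2 (e.strictMono hij)

lemma sorting_unique {N : ℕ} (x : Fin N → ℝ) (σ τ : Equiv.Perm (Fin N))
    (hσ : StrictMono (x ∘ σ)) (hτ : StrictMono (x ∘ τ)) : σ = τ := by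
  have hrange : Set.range (x ∘ σ) = Set.range (x ∘ τ) := by
    rw [Function.Surjective.range_comp σ.surjective, Function.Surjective.range_comp τ.surjective]
  haveI : WellFoundedLT (Fin N) := inferInstance
  have heq : (x ∘ σ) = (x ∘ τ) := (StrictMono.range_inj hσ hτ).1 hrange
  have hxinj : Function.Injective x := by
    intro a b hab
    have := hσ.injective (a₁ := σ.symm a) (a₂ := σ.symm b) (by
      show x (σ (σ.symm a)) = x (σ (σ.symm b))
      rwa [Equiv.apply_symm_apply, Equiv.apply_symm_apply])
    have h2 := congrArg σ this
    rwa [Equiv.apply_symm_apply, Equiv.apply_symm_apply] at h2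
  exact Equiv.ext fun i => hxinj (congrFun heq i)

end Aux

/-- the histogram of the `m` conformal p-values over the `n+1` atoms
`{ℓ/(n+1) : ℓ = 1,…,n+1}` is uniformly distributed over all histograms:
`P(M_ℓ((n+1)p) = m_ℓ for all ℓ) = 1 / C(n+m, m)`. -/
theorem conformal_histogram_uniform
    {Ω : Type*} [MeasurableSpace Ω] (P : Measure Ω) [IsProbabilityMeasure P]
    (n m : ℕ) (S : ℕ → Ω → ℝ)
    (hS : ∀ i, Measurable (S i))
    (hex : Exchangeable P (n + m) S) (hnt : NoTies P (n + m) S)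
    (mvec : Fin (n + 1) → ℕ) (hsum : ∑ k, mvec k = m) :
    (P {ω | ∀ k : Fin (n + 1),
        ((Finset.range m).filter
          (fun i => pval n S i ω = ((k : ℕ) + 1 : ℝ) / (n + 1))).card = mvec k}).toReal
      = 1 / (Nat.choose (n + m) m : ℝ) := by
  classical
  -- the sorting events
  set A : Equiv.Perm (Fin (n+m)) → Set Ω :=
    fun σ => {ω | StrictMono fun i : Fin (n+m) => S (σ i) ω} with hAdef
  have hmeas_strict : MeasurableSet {x : Fin (n+m) → ℝ | StrictMono x} := by
    have hset : {x : Fin (n+m) → ℝ | StrictMono x}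
        = ⋂ (i : Fin (n+m)) (j : Fin (n+m)) (_ : i < j), {x | x i < x j} := by
      ext x
      simp only [Set.mem_setOf_eq, Set.mem_iInter]
      exact ⟨fun h i j hij => h hij, fun h a b hab => h a b hab⟩
    rw [hset]
    exact MeasurableSet.iInter fun i => MeasurableSet.iInter fun j =>
      MeasurableSet.iInter fun _ =>
        measurableSet_lt (measurable_pi_apply i) (measurable_pi_apply j)
  have hFmeas : ∀ σ : Equiv.Perm (Fin (n+m)),
      Measurable (fun ω => fun i : Fin (n+m) => S (σ i) ω) :=
    fun σ => measurable_pi_lambda _ fun i => hS _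
  have hA : ∀ σ, MeasurableSet (A σ) := fun σ => (hFmeas σ) hmeas_strict
  have hPA : ∀ σ, P (A σ) = P (A (Equiv.refl _)) := by
    intro σ
    have h1 : P (A σ) = Measure.map (fun ω => fun i : Fin (n+m) => S (σ i) ω) P
        {x | StrictMono x} := (Measure.map_apply (hFmeas σ) hmeas_strict).symm
    have h2 : P (A (Equiv.refl _)) = Measure.map (fun ω => fun i : Fin (n+m) => S i ω) P
        {x | StrictMono x} :=
      (Measure.map_apply (hFmeas (Equiv.refl _)) hmeas_strict).symm
    rw [h1, hex σ, h2]
  have hdisj : (↑(Finset.univ : Finset (Equiv.Perm (Fin (n+m)))) : Set _).PairwiseDisjoint A := by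
    intro σ _ τ _ hne
    rw [Function.onFun, Set.disjoint_left]
    intro ω hσ hτ
    exact hne (sorting_unique (fun i : Fin (n+m) => S (i:ℕ) ω) σ τ hσ hτ)
  set U : Set Ω := ⋃ σ ∈ (Finset.univ : Finset (Equiv.Perm (Fin (n+m)))), A σ with hUdef
  have hUm : MeasurableSet U :=
    MeasurableSet.biUnion (Finset.countable_toSet _) (fun σ _ => hA σ)
  have hUc : P Uᶜ = 0 := by
    have hnt' := MeasureTheory.ae_iff.1 hnt
    refine measure_mono_null ?_ hnt'
    intro ω hω
    simp only [Set.mem_compl_iff] at hω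
    simp only [Set.mem_setOf_eq]
    intro hprop
    apply hω
    have hinj : Function.Injective fun i : Fin (n+m) => S (i:ℕ) ω := by
      intro a b hab
      by_contra hne
      exact hprop a.val a.isLt b.val b.isLt (fun h => hne (Fin.ext h)) hab
    obtain ⟨σ, hσ⟩ := exists_sorting _ hinj
    exact Set.mem_iUnion₂.2 ⟨σ, Finset.mem_univ σ, hσ⟩
  have hU1 : P U = 1 := (prob_compl_eq_zero_iff hUm).1 hUc
  have hsum1 : ∑ σ : Equiv.Perm (Fin (n+m)), P (A σ) = 1 := by
    rw [← measure_biUnion_finset hdisj (fun σ _ => hA σ)]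
    exact hU1
  have hcval : P (A (Equiv.refl _)) = (((n+m).factorial : ENNReal))⁻¹ := by
    have h1 : ((n+m).factorial : ENNReal) * P (A (Equiv.refl _)) = 1 := by
      rw [← hsum1, Finset.sum_congr rfl (fun σ _ => hPA σ), Finset.sum_const,
        Finset.card_univ, Fintype.card_perm, Fintype.card_fin, nsmul_eq_mul]
    have hne0 : ((n+m).factorial : ENNReal) ≠ 0 := Nat.cast_ne_zero.2 (Nat.factorial_pos _).ne'
    have hnetop : ((n+m).factorial : ENNReal) ≠ ⊤ := ENNReal.natCast_ne_top _
    calc P (A (Equiv.refl _))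
        = (((n+m).factorial : ENNReal))⁻¹ * (((n+m).factorial : ENNReal) * P (A (Equiv.refl _))) := by
          rw [← mul_assoc, ENNReal.inv_mul_cancel hne0 hnetop, one_mul]
      _ = (((n+m).factorial : ENNReal))⁻¹ := by rw [h1, mul_one]
  -- pointwise analysis on a sorting event
  have key : ∀ (ω : Ω) (σ : Equiv.Perm (Fin (n+m))), ω ∈ A σ →
      ((∀ k : Fin (n+1), ((Finset.range m).filter
          (fun i => pval n S i ω = ((k : ℕ) + 1 : ℝ) / (n + 1))).card = mvec k)
        ↔ ∀ k : Fin (n+1),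
          (Finset.univ.filter fun i : Fin m => cnt n m σ.symm i = (k:ℕ)).card = mvec k) := by
    intro ω σ hσ
    have hσ' : StrictMono fun i : Fin (n+m) => S (σ i) ω := hσ
    have hle : ∀ a b : Fin (n+m), (S (a:ℕ) ω ≤ S (b:ℕ) ω ↔ σ.symm a ≤ σ.symm b) := by
      intro a b
      have h2 := hσ'.le_iff_le (a := σ.symm a) (b := σ.symm b)
      simpa using h2
    have hpv : ∀ i : Fin m,
        pval n S (i:ℕ) ω = ((cnt n m σ.symm i : ℝ) + 1)/((n:ℝ)+1) := by
      intro i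
      have hcard : ((Finset.range n).filter (fun j => S (n + (i:ℕ)) ω ≤ S j ω)).card
          = cnt n m σ.symm i := by
        rw [cnt, Finset.card_filter, Finset.card_filter,
          ← Fin.sum_univ_eq_sum_range (fun j => if S (n + (i:ℕ)) ω ≤ S j ω then 1 else 0) n]
        refine Finset.sum_congr rfl fun j _ => ?_
        have h1 : (S (n + (i:ℕ)) ω ≤ S (j:ℕ) ω)
            ↔ (σ.symm (Fin.natAdd n i) ≤ σ.symm (Fin.castAdd m j)) := by
          have := hle (Fin.natAdd n i) (Fin.castAdd m j)
          simpa using this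
        exact if_congr h1 rfl rfl
      rw [pval, hcard]
      push_cast
      ring
    have hpv2 : ∀ (i : Fin m) (k : Fin (n+1)),
        (pval n S (i:ℕ) ω = ((k:ℕ) + 1 : ℝ)/((n:ℝ)+1)) ↔ cnt n m σ.symm i = (k:ℕ) := by
      intro i k
      have hne : ((n:ℝ)+1) ≠ 0 := by positivity
      rw [hpv i, div_eq_div_iff hne hne, mul_left_inj' hne]
      norm_cast
      omega
    have hcards : ∀ k : Fin (n+1),
        ((Finset.range m).filter
          (fun i => pval n S i ω = ((k : ℕ) + 1 : ℝ) / (n + 1))).card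
        = (Finset.univ.filter fun i : Fin m => cnt n m σ.symm i = (k:ℕ)).card := by
      intro k
      rw [Finset.card_filter, Finset.card_filter,
        ← Fin.sum_univ_eq_sum_range
          (fun i => if pval n S i ω = ((k : ℕ) + 1 : ℝ) / (n + 1) then 1 else 0) m]
      exact Finset.sum_congr rfl fun i _ => if_congr (hpv2 i k) rfl rfl
    exact forall_congr' fun k => by rw [hcards k]
  -- the event as a union of sorting events
  set G : Finset (Equiv.Perm (Fin (n+m))) :=
    Finset.univ.filter (fun σ : Equiv.Perm (Fin (n+m)) => ∀ k : Fin (n+1),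
      (Finset.univ.filter fun i : Fin m => cnt n m σ.symm i = (k:ℕ)).card = mvec k) with hGdef
  set Eset : Set Ω := {ω | ∀ k : Fin (n + 1),
      ((Finset.range m).filter
        (fun i => pval n S i ω = ((k : ℕ) + 1 : ℝ) / (n + 1))).card = mvec k} with hEdef
  have hEU : Eset ∩ U = ⋃ σ ∈ G, A σ := by
    ext ω
    constructor
    · rintro ⟨hE, hU'⟩
      obtain ⟨σ, -, hσ⟩ := Set.mem_iUnion₂.1 hU'
      refine Set.mem_iUnion₂.2 ⟨σ, ?_, hσ⟩
      rw [hGdef, Finset.mem_filter]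
      exact ⟨Finset.mem_univ _, (key ω σ hσ).1 hE⟩
    · intro h
      obtain ⟨σ, hσG, hσ⟩ := Set.mem_iUnion₂.1 h
      rw [hGdef, Finset.mem_filter] at hσG
      exact ⟨(key ω σ hσ).2 hσG.2, Set.mem_iUnion₂.2 ⟨σ, Finset.mem_univ σ, hσ⟩⟩
  have hPE : P Eset = (G.card : ENNReal) * (((n+m).factorial : ENNReal))⁻¹ := by
    have h1 : P Eset = P (Eset ∩ U) := by
      refine le_antisymm ?_ (measure_mono Set.inter_subset_left)
      calc P Eset ≤ P ((Eset ∩ U) ∪ Uᶜ) := measure_mono (fun ω hω => by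
            by_cases h : ω ∈ U
            · exact Or.inl ⟨hω, h⟩
            · exact Or.inr h)
        _ ≤ P (Eset ∩ U) + P Uᶜ := measure_union_le _ _
        _ = P (Eset ∩ U) := by rw [hUc, add_zero]
    rw [h1, hEU, measure_biUnion_finset
      (hdisj.subset (by intro σ hσ; exact Finset.mem_coe.2 (Finset.mem_univ _)))
      (fun σ _ => hA σ)]
    rw [Finset.sum_congr rfl (fun σ _ => (hPA σ).trans hcval), Finset.sum_const, nsmul_eq_mul]
  have hGcard : G.card = n.factorial * m.factorial := by
    rw [hGdef, ← Fintype.card_subtype]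
    exact count_perms mvec hsum
  rw [hPE, hGcard]
  rw [ENNReal.toReal_mul, ENNReal.toReal_inv]
  rw [ENNReal.toReal_natCast, ENNReal.toReal_natCast]
  have hchoose : (0:ℝ) < ((n+m).choose m : ℝ) := by
    exact_mod_cast Nat.choose_pos (Nat.le_add_left m n)
  have hfact : (0:ℝ) < ((n+m).factorial : ℝ) := by
    exact_mod_cast Nat.factorial_pos _
  have hNat : n.factorial * m.factorial * (n+m).choose m = (n+m).factorial := by
    have h := Nat.choose_mul_factorial_mul_factorial (Nat.le_add_left m n)
    have h2 : n + m - m = n := by omega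
    rw [h2] at h
    rw [← h]; ring
  field_simp
  exact_mod_cast hNat
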